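/- Let D=(V,E) be a finite multidigraph, let u,v ∈ V be distinct vertices, and suppose the arc (u,v) occurs with multiplicity n and the arc (v,u) occurs with multiplicity m in E. Let D₃ be the multidigraph obtained from D by deleting all n arcs (u,v) and all m arcs (v,u), let D₁ = D₃ with one arc (u,v) added, and let D₂ = D₃ with one arc (v,u) added. Then π(D;x) = n·π(D₁;x) + m·π(D₂;x) − (n+m−1)·π(D₃;x). -/
import Mathlib


open Classical

/-- A finite multidigraph: a finite set `V` of vertices (natural numbers),
a finite set `A` of arc identifiers, and a map `ends` assigning to each arc
identifier its (source, target) pair of vertices.  Parallel arcs are distinct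
identifiers with the same endpoints; loops are arcs with equal endpoints. -/
structure MDigraph where
  V : Finset ℕ
  A : Finset ℕ
  ends : ℕ → ℕ × ℕ

namespace MDigraph

/-- Every arc has both endpoints in the vertex set. -/
def WellFormed (D : MDigraph) : Prop :=
  ∀ a ∈ D.A, (D.ends a).1 ∈ D.V ∧ (D.ends a).2 ∈ D.V

/-- An arc is a loop if its source equals its target. -/
def IsLoop (D : MDigraph) (e : ℕ) : Prop := (D.ends e).1 = (D.ends e).2

/-- Arc deletion `D_{-e}`. -/
def delArc (D : MDigraph) (e : ℕ) : MDigraph := ⟨D.V, D.A.erase e, D.ends⟩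

/-- Arc contraction `D_{/e}`.  For a non-loop arc `e = (u,v)`: merge `u` and `v`
into a single vertex (named `u`), removing exactly the arcs of the form `(u,x)`
and `(y,v)`.  For a loop `e = (u,u)`: delete `u` together with all incident arcs. -/
noncomputable def contractArc (D : MDigraph) (e : ℕ) : MDigraph :=
  let u := (D.ends e).1
  let v := (D.ends e).2
  if u = v then
    ⟨D.V.erase u, D.A.filter (fun a => (D.ends a).1 ≠ u ∧ (D.ends a).2 ≠ u), D.ends⟩
  else
    ⟨D.V.erase v, D.A.filter (fun a => (D.ends a).1 ≠ u ∧ (D.ends a).2 ≠ v),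
      fun a => ((if (D.ends a).1 = v then u else (D.ends a).1),
                (if (D.ends a).2 = v then u else (D.ends a).2))⟩

/-- Arc extraction `D_{†e}`: delete both endpoints of `e` and all arcs incident to them. -/
noncomputable def extractArc (D : MDigraph) (e : ℕ) : MDigraph :=
  let u := (D.ends e).1
  let v := (D.ends e).2
  ⟨(D.V.erase u).erase v,
   D.A.filter (fun a =>
     (D.ends a).1 ≠ u ∧ (D.ends a).1 ≠ v ∧ (D.ends a).2 ≠ u ∧ (D.ends a).2 ≠ v),
   D.ends⟩

/-- Add one new arc with endpoints `p` (using a fresh arc identifier). -/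
noncomputable def addArc (D : MDigraph) (p : ℕ × ℕ) : MDigraph :=
  ⟨D.V, insert (D.A.sup id + 1) D.A, Function.update D.ends (D.A.sup id + 1) p⟩

/-- Vertex deletion `D_{-v}`. -/
noncomputable def delVertex (D : MDigraph) (v : ℕ) : MDigraph :=
  ⟨D.V.erase v, D.A.filter (fun a => (D.ends a).1 ≠ v ∧ (D.ends a).2 ≠ v), D.ends⟩

/-- Vertex contraction `D_{/v}`: delete `v`, and for every arc `(u,v)` into `v`
and every arc `(v,w)` out of `v` add a new arc `(u,w)`; thus the multiplicity of
a new arc `(u,w)` is the multiplicity of `(u,v)` times that of `(v,w)`. -/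
noncomputable def contractVertex (D : MDigraph) (v : ℕ) : MDigraph :=
  ⟨D.V.erase v,
   ((D.A.filter (fun a => (D.ends a).1 ≠ v ∧ (D.ends a).2 ≠ v)).image (fun a => 2 * a)) ∪
     (((D.A.filter (fun a => (D.ends a).2 = v)) ×ˢ (D.A.filter (fun a => (D.ends a).1 = v))).image
       (fun p => 2 * Nat.pair p.1 p.2 + 1)),
   fun n =>
     if n % 2 = 0 then D.ends (n / 2)
     else ((D.ends (Nat.unpair ((n - 1) / 2)).1).1, (D.ends (Nat.unpair ((n - 1) / 2)).2).2)⟩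

/-- The arc-less digraph on `n` vertices. -/
def emptyD (n : ℕ) : MDigraph := ⟨Finset.range n, ∅, fun _ => (0, 0)⟩

/-- Disjoint union of two multidigraphs (vertices and arcs relabelled evenly/oddly). -/
noncomputable def disjUnion (D₁ D₂ : MDigraph) : MDigraph :=
  ⟨(D₁.V.image (fun v => 2 * v)) ∪ (D₂.V.image (fun v => 2 * v + 1)),
   (D₁.A.image (fun a => 2 * a)) ∪ (D₂.A.image (fun a => 2 * a + 1)),
   fun n =>
     if n % 2 = 0 then (2 * (D₁.ends (n / 2)).1, 2 * (D₁.ends (n / 2)).2)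
     else (2 * (D₂.ends (n / 2)).1 + 1, 2 * (D₂.ends (n / 2)).2 + 1)⟩

/-- Isomorphism of multidigraphs. -/
def Iso (D₁ D₂ : MDigraph) : Prop :=
  ∃ φ ψ : ℕ → ℕ, Set.BijOn φ ↑D₁.V ↑D₂.V ∧ Set.BijOn ψ ↑D₁.A ↑D₂.A ∧
    ∀ a ∈ D₁.A, D₂.ends (ψ a) = (φ (D₁.ends a).1, φ (D₁.ends a).2)

/-- `C` is (the arc set of) a directed cycle of length `k` in `D`: `k` distinct arcs
forming a closed directed walk through `k` distinct vertices (`k ≥ 1`;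
a loop is a directed cycle of length 1). -/
def IsCycle (D : MDigraph) (C : Finset ℕ) (k : ℕ) : Prop :=
  1 ≤ k ∧ ∃ v a : ℕ → ℕ,
    (∀ i j, i < k → j < k → v i = v j → i = j) ∧
    (∀ i j, i < k → j < k → a i = a j → i = j) ∧
    (∀ i, i < k → a i ∈ D.A ∧ D.ends (a i) = (v i, v ((i + 1) % k))) ∧
    C = (Finset.range k).image a

/-- `P` is (the arc set of) a directed path of length `k` in `D`: `k` distinct arcs
forming a directed walk through `k+1` distinct vertices (`k ≥ 1`). -/
def IsPath (D : MDigraph) (P : Finset ℕ) (k : ℕ) : Prop :=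
  1 ≤ k ∧ ∃ v a : ℕ → ℕ,
    (∀ i j, i ≤ k → j ≤ k → v i = v j → i = j) ∧
    (∀ i j, i < k → j < k → a i = a j → i = j) ∧
    (∀ i, i < k → a i ∈ D.A ∧ D.ends (a i) = (v i, v (i + 1))) ∧
    P = (Finset.range k).image a

/-- Number `c_k(D)` of directed cycles of length `k`. -/
noncomputable def cycCount (D : MDigraph) (k : ℕ) : ℕ :=
  (D.A.powerset.filter (fun C => IsCycle D C k)).card

/-- Number `p_k(D)` of directed paths of length `k`. -/
noncomputable def pathCount (D : MDigraph) (k : ℕ) : ℕ :=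
  (D.A.powerset.filter (fun P => IsPath D P k)).card

/-- The cycle polynomial `σ(D;x) = ∑_k c_k(D) x^k`. -/
noncomputable def cyclePoly (D : MDigraph) : Polynomial ℝ :=
  ∑ k ∈ Finset.range (D.A.card + 1), (cycCount D k : ℝ) • Polynomial.X ^ k

/-- The path polynomial `π(D;x) = ∑_k p_k(D) x^k`. -/
noncomputable def pathPoly (D : MDigraph) : Polynomial ℝ :=
  ∑ k ∈ Finset.range (D.A.card + 1), (pathCount D k : ℝ) • Polynomial.X ^ k


/-- Out-degree of `v`: arcs with tail `v`, counted with multiplicity. -/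
noncomputable def outDeg (D : MDigraph) (v : ℕ) : ℕ :=
  (D.A.filter (fun a => (D.ends a).1 = v)).card

/-- In-degree of `v`: arcs with head `v`, counted with multiplicity. -/
noncomputable def inDeg (D : MDigraph) (v : ℕ) : ℕ :=
  (D.A.filter (fun a => (D.ends a).2 = v)).card

/-- `P` is a directed path of length `k` in `D` beginning at `v0`. -/
def IsPathFrom (D : MDigraph) (v0 : ℕ) (P : Finset ℕ) (k : ℕ) : Prop :=
  1 ≤ k ∧ ∃ v a : ℕ → ℕ, v 0 = v0 ∧
    (∀ i j, i ≤ k → j ≤ k → v i = v j → i = j) ∧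
    (∀ i j, i < k → j < k → a i = a j → i = j) ∧
    (∀ i, i < k → a i ∈ D.A ∧ D.ends (a i) = (v i, v (i + 1))) ∧
    P = (Finset.range k).image a

/-- `P` is a directed path of length `k` in `D` ending at `v0`. -/
def IsPathTo (D : MDigraph) (v0 : ℕ) (P : Finset ℕ) (k : ℕ) : Prop :=
  1 ≤ k ∧ ∃ v a : ℕ → ℕ, v k = v0 ∧
    (∀ i j, i ≤ k → j ≤ k → v i = v j → i = j) ∧
    (∀ i j, i < k → j < k → a i = a j → i = j) ∧
    (∀ i, i < k → a i ∈ D.A ∧ D.ends (a i) = (v i, v (i + 1))) ∧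
    P = (Finset.range k).image a

/-- `p_k(D,v,+)`: number of directed paths of length `k` beginning at `v`. -/
noncomputable def pathFromCount (D : MDigraph) (v : ℕ) (k : ℕ) : ℕ :=
  (D.A.powerset.filter (fun P => IsPathFrom D v P k)).card

/-- `p_k(D,v,−)`: number of directed paths of length `k` ending at `v`. -/
noncomputable def pathToCount (D : MDigraph) (v : ℕ) (k : ℕ) : ℕ :=
  (D.A.powerset.filter (fun P => IsPathTo D v P k)).card

/-- `π_{v+}(D;x) = ∑_k p_k(D,v,+) x^k`. -/
noncomputable def pathFromPoly (D : MDigraph) (v : ℕ) : Polynomial ℝ :=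
  ∑ k ∈ Finset.range (D.A.card + 1), (pathFromCount D v k : ℝ) • Polynomial.X ^ k

/-- `π_{v-}(D;x) = ∑_k p_k(D,v,−) x^k`. -/
noncomputable def pathToPoly (D : MDigraph) (v : ℕ) : Polynomial ℝ :=
  ∑ k ∈ Finset.range (D.A.card + 1), (pathToCount D v k : ℝ) • Polynomial.X ^ k

/-- In the spanning subgraph `D⟨F⟩`, every vertex has out-degree ≤ 1 and
in-degree ≤ 1; equivalently, every component of `D⟨F⟩` is a directed cycle,
a directed path, or an isolated vertex. -/
def DegOK (D : MDigraph) (F : Finset ℕ) : Prop :=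
  ∀ w : ℕ, (F.filter (fun a => (D.ends a).1 = w)).card ≤ 1 ∧
    (F.filter (fun a => (D.ends a).2 = w)).card ≤ 1

/-- `kc(D⟨F⟩)`: the number of components of the spanning subgraph `D⟨F⟩` that are
directed cycles (for degree-constrained `F`, these are exactly the directed
cycles contained in `F`). -/
noncomputable def kcF (D : MDigraph) (F : Finset ℕ) : ℕ :=
  (F.powerset.filter (fun C => ∃ k, IsCycle D C k)).card

/-- `kp(D⟨F⟩)`: the number of components of the spanning subgraph `D⟨F⟩` that are
directed paths with at least one arc (for degree-constrained `F`, counted by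
their initial vertices: vertices that are the tail of an arc of `F` but the
head of no arc of `F`). -/
noncomputable def kpF (D : MDigraph) (F : Finset ℕ) : ℕ :=
  ((F.image (fun a => (D.ends a).1)).filter
    (fun w => (F.filter (fun a => (D.ends a).2 = w)).card = 0)).card

/-- The number of vertices covered by (incident to) the arcs of `F`. -/
noncomputable def coveredCard (D : MDigraph) (F : Finset ℕ) : ℕ :=
  ((F.image (fun a => (D.ends a).1)) ∪ (F.image (fun a => (D.ends a).2))).card

/-- `k(D⟨F⟩)`: total number of connected components of the spanning subgraph
`D⟨F⟩` (isolated vertices included), for degree-constrained `F` in a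
well-formed digraph. -/
noncomputable def kF (D : MDigraph) (F : Finset ℕ) : ℕ :=
  D.V.card - coveredCard D F + kcF D F + kpF D F

/-- `c(D⟨F⟩)`: number of covered components (components with at least one arc). -/
noncomputable def cF (D : MDigraph) (F : Finset ℕ) : ℕ := kcF D F + kpF D F

/-- `c₁(D⟨F⟩)`: number of loops in `F`. -/
noncomputable def loopCount (D : MDigraph) (F : Finset ℕ) : ℕ :=
  (F.filter (fun a => (D.ends a).1 = (D.ends a).2)).card

/-- The bivariate cycle polynomial
`σ̂(D;x,y) = ∑_F x^{|F|} y^{kc(D⟨F⟩)}`, the sum being over all arc subsets `F`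
such that every component of `D⟨F⟩` is a directed cycle or an isolated vertex. -/
noncomputable def biCycPoly (D : MDigraph) : MvPolynomial (Fin 2) ℝ :=
  ∑ F ∈ D.A.powerset.filter (fun F => DegOK D F ∧ kpF D F = 0),
    MvPolynomial.X 0 ^ F.card * MvPolynomial.X 1 ^ kcF D F

/-- The bivariate path polynomial
`π̂(D;x,y) = ∑_F x^{|F|} y^{kp(D⟨F⟩)}`, the sum being over all arc subsets `F`
such that every component of `D⟨F⟩` is a directed path or an isolated vertex. -/
noncomputable def biPathPoly (D : MDigraph) : MvPolynomial (Fin 2) ℝ :=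
  ∑ F ∈ D.A.powerset.filter (fun F => DegOK D F ∧ kcF D F = 0),
    MvPolynomial.X 0 ^ F.card * MvPolynomial.X 1 ^ kpF D F

/-- The trivariate cycle-path polynomial
`σ̂π(D;x,y,z) = ∑_F x^{|F|} y^{kc(D⟨F⟩)} z^{kp(D⟨F⟩)}`, the sum being over all
arc subsets `F` in which every vertex has in- and out-degree at most 1. -/
noncomputable def triPoly (D : MDigraph) : MvPolynomial (Fin 3) ℝ :=
  ∑ F ∈ D.A.powerset.filter (fun F => DegOK D F),
    MvPolynomial.X 0 ^ F.card * MvPolynomial.X 1 ^ kcF D F * MvPolynomial.X 2 ^ kpF D F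

/-- The geometric cover polynomial `C̃(D;x,y) = ∑_{i,j} c_{i,j}(D) x^i y^j`,
where `c_{i,j}(D)` is the number of ways of disjointly covering all vertices of
`D` with `i` directed paths and `j` directed cycles (isolated vertices counting
as paths of length 0): a cover is an arc subset `F` with all in- and out-degrees
at most 1, contributing `j = kc(D⟨F⟩)` cycles and
`i = kp(D⟨F⟩) + (number of uncovered vertices)` paths. -/
noncomputable def geomCover (D : MDigraph) (x y : ℝ) : ℝ :=
  ∑ F ∈ D.A.powerset.filter (fun F => DegOK D F),
    x ^ (kpF D F + (D.V.card - coveredCard D F)) * y ^ kcF D F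

/-- No vertex is incident both to an arc of `A` and to an arc of `B`. -/
def NoCommonVertex (D : MDigraph) (A B : Finset ℕ) : Prop :=
  ∀ a ∈ A, ∀ b ∈ B,
    (D.ends a).1 ≠ (D.ends b).1 ∧ (D.ends a).1 ≠ (D.ends b).2 ∧
    (D.ends a).2 ≠ (D.ends b).1 ∧ (D.ends a).2 ≠ (D.ends b).2

/-- The explicit polynomial
`N(D;x,y,z) = ∑_{(A,B)} x^{k(D⟨A∪B⟩)−c(D⟨B⟩)−c₁(D⟨A⟩)} y^{|A|+|B|−c(D⟨B⟩)} z^{c(D⟨B⟩)}`,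
summing over pairs of disjoint arc subsets `A, B` sharing no vertex such that
every component of `D⟨A∪B⟩` is a directed cycle, a directed path or an isolated
vertex. -/
noncomputable def NPoly (D : MDigraph) : MvPolynomial (Fin 3) ℝ :=
  ∑ p ∈ (D.A.powerset ×ˢ D.A.powerset).filter
      (fun p => Disjoint p.1 p.2 ∧ NoCommonVertex D p.1 p.2 ∧ DegOK D (p.1 ∪ p.2)),
    MvPolynomial.X 0 ^ (kF D (p.1 ∪ p.2) - cF D p.2 - loopCount D p.1) *
      MvPolynomial.X 1 ^ (p.1.card + p.2.card - cF D p.2) *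
      MvPolynomial.X 2 ^ cF D p.2

end MDigraph

/-- A finite undirected graph: a finite vertex set and a finite set of
unordered pairs as edges. -/
structure SGraph where
  V : Finset ℕ
  E : Finset (Sym2 ℕ)

namespace SGraph

/-- `G` is a simple graph: no loops, and all edge endpoints are vertices. -/
def Simple (G : SGraph) : Prop :=
  (∀ s ∈ G.E, ¬ s.IsDiag) ∧ ∀ s ∈ G.E, ∀ a ∈ s, a ∈ G.V

/-- `P` is (the edge set of) an undirected path of length `k` in `G`. -/
def IsUPath (G : SGraph) (P : Finset (Sym2 ℕ)) (k : ℕ) : Prop :=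
  1 ≤ k ∧ ∃ v : ℕ → ℕ,
    (∀ i j, i ≤ k → j ≤ k → v i = v j → i = j) ∧
    (∀ i, i < k → s(v i, v (i + 1)) ∈ G.E) ∧
    P = (Finset.range k).image (fun i => s(v i, v (i + 1)))

/-- `C` is (the edge set of) an undirected cycle of length `k ≥ 3` in `G`. -/
def IsUCycle (G : SGraph) (C : Finset (Sym2 ℕ)) (k : ℕ) : Prop :=
  3 ≤ k ∧ ∃ v : ℕ → ℕ,
    (∀ i j, i < k → j < k → v i = v j → i = j) ∧
    (∀ i, i < k → s(v i, v ((i + 1) % k)) ∈ G.E) ∧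
    C = (Finset.range k).image (fun i => s(v i, v ((i + 1) % k)))

/-- `p_k(G)`: number of undirected paths of length `k` in `G`. -/
noncomputable def uPathCount (G : SGraph) (k : ℕ) : ℕ :=
  (G.E.powerset.filter (fun P => IsUPath G P k)).card

/-- `c_k(G)`: number of undirected cycles of length `k` in `G`. -/
noncomputable def uCycCount (G : SGraph) (k : ℕ) : ℕ :=
  (G.E.powerset.filter (fun C => IsUCycle G C k)).card

/-- `π(G;x) = ∑_k p_k(G) x^k`. -/
noncomputable def uPathPoly (G : SGraph) : Polynomial ℝ :=
  ∑ k ∈ Finset.range (G.E.card + 1), (uPathCount G k : ℝ) • Polynomial.X ^ k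

/-- `σ(G;x) = ∑_k c_k(G) x^k`. -/
noncomputable def uCycPoly (G : SGraph) : Polynomial ℝ :=
  ∑ k ∈ Finset.range (G.E.card + 1), (uCycCount G k : ℝ) • Polynomial.X ^ k

/-- The digraph `D(G)` obtained from `G` by replacing each edge `{u,v}` by the
two oppositely oriented arcs `(u,v)` and `(v,u)`. -/
noncomputable def toDigraph (G : SGraph) : MDigraph :=
  ⟨G.V, ((G.V ×ˢ G.V).filter (fun p => s(p.1, p.2) ∈ G.E)).image (fun p => Nat.pair p.1 p.2),
   Nat.unpair⟩

end SGraph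


namespace MDigraph

lemma isPath_subset {E : MDigraph} {P : Finset ℕ} {k : ℕ} (hP : IsPath E P k) : P ⊆ E.A := by
  obtain ⟨hk1, v, a, hv, ha, harc, hPa⟩ := hP
  subst hPa
  intro g hg
  obtain ⟨i, hi, rfl⟩ := Finset.mem_image.mp hg
  exact (harc i (Finset.mem_range.mp hi)).1

lemma isPath_card {E : MDigraph} {P : Finset ℕ} {k : ℕ} (hP : IsPath E P k) : P.card = k := by
  obtain ⟨hk1, v, a, hv, ha, harc, hPa⟩ := hP
  subst hPa
  rw [Finset.card_image_of_injOn, Finset.card_range]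
  intro i hi j hj hij
  exact ha i j (Finset.mem_range.mp hi) (Finset.mem_range.mp hj) hij

lemma pathCount_eq_zero (E : MDigraph) {k : ℕ} (hk : E.A.card < k) : pathCount E k = 0 := by
  rw [pathCount, Finset.card_eq_zero, Finset.filter_eq_empty_iff]
  intro P _ hP
  have h1 := isPath_card hP
  have h2 := Finset.card_le_card (isPath_subset hP)
  omega

lemma pathPoly_eq_sum (E : MDigraph) (N : ℕ) (hN : E.A.card + 1 ≤ N) :
    E.pathPoly = ∑ k ∈ Finset.range N, (pathCount E k : ℝ) • Polynomial.X ^ k := by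
  rw [pathPoly]
  apply Finset.sum_subset (Finset.range_subset_range.mpr hN)
  intro k hk hk'
  simp only [Finset.mem_range] at hk hk'
  rw [pathCount_eq_zero E (by omega)]
  simp

lemma mem_of_isPath {P : Finset ℕ} {k : ℕ} {a : ℕ → ℕ}
    (hPa : P = (Finset.range k).image a) {i : ℕ} (hi : i < k) : a i ∈ P := by
  subst hPa; exact Finset.mem_image_of_mem a (Finset.mem_range.mpr hi)

lemma isPath_congr (E E' : MDigraph) (P : Finset ℕ) (k : ℕ)
    (hsub : ∀ g ∈ P, g ∈ E'.A ∧ E'.ends g = E.ends g)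
    (hP : IsPath E P k) : IsPath E' P k := by
  obtain ⟨hk1, v, a, hv, ha, harc, hPa⟩ := hP
  refine ⟨hk1, v, a, hv, ha, fun i hi => ?_, hPa⟩
  have hai : a i ∈ P := mem_of_isPath hPa hi
  obtain ⟨h1, h2⟩ := hsub _ hai
  exact ⟨h1, h2.trans (harc i hi).2⟩

lemma isPath_swap (E E' : MDigraph) (f e k : ℕ) (P : Finset ℕ)
    (hP : IsPath E P k) (hfP : f ∈ P)
    (he : e ∈ E'.A) (hee : E'.ends e = E.ends f)
    (hrest : ∀ g ∈ P, g ≠ f → g ∈ E'.A ∧ E'.ends g = E.ends g ∧ g ≠ e) :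
    IsPath E' (insert e (P.erase f)) k := by
  obtain ⟨hk1, v, a, hv, ha, harc, hPa⟩ := hP
  refine ⟨hk1, v, fun i => if a i = f then e else a i, hv, ?_, ?_, ?_⟩
  · intro i j hi hj hij
    by_cases h1 : a i = f <;> by_cases h2 : a j = f <;> simp only [h1, h2, if_pos, if_neg,
      if_true, if_false, ite_true, ite_false] at hij
    · exact ha i j hi hj (h1.trans h2.symm)
    · exact absurd hij.symm (hrest _ (mem_of_isPath hPa hj) h2).2.2
    · exact absurd hij (hrest _ (mem_of_isPath hPa hi) h1).2.2
    · exact ha i j hi hj hij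
  · intro i hi
    by_cases h1 : a i = f
    · simp only [h1, ite_true, if_pos]
      exact ⟨he, by rw [hee, ← h1, (harc i hi).2]⟩
    · obtain ⟨hmem, hend, _⟩ := hrest _ (mem_of_isPath hPa hi) h1
      simp only [h1, ite_false, if_neg, not_false_iff]
      exact ⟨hmem, hend.trans (harc i hi).2⟩
  · ext g
    simp only [Finset.mem_insert, Finset.mem_erase, Finset.mem_image, Finset.mem_range]
    constructor
    · rintro (rfl | ⟨hgf, hg⟩)
      · have : f ∈ P := hfP
        rw [hPa] at this
        obtain ⟨i, hi, hfi⟩ := Finset.mem_image.mp this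
        exact ⟨i, Finset.mem_range.mp hi, by simp [hfi]⟩
      · rw [hPa] at hg
        obtain ⟨i, hi, rfl⟩ := Finset.mem_image.mp hg
        exact ⟨i, Finset.mem_range.mp hi, by simp [hgf]⟩
    · rintro ⟨i, hi, rfl⟩
      by_cases h1 : a i = f
      · simp [h1]
      · right
        simp only [h1, ite_false, if_neg, not_false_iff]
        exact ⟨h1, mem_of_isPath hPa hi⟩

lemma special_unique (D : MDigraph) {u v : ℕ} (huv : u ≠ v) {P : Finset ℕ} {k : ℕ}
    (hP : IsPath D P k) {f g : ℕ} (hf : f ∈ P) (hg : g ∈ P)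
    (hfe : D.ends f = (u, v) ∨ D.ends f = (v, u))
    (hge : D.ends g = (u, v) ∨ D.ends g = (v, u)) : f = g := by
  obtain ⟨hk1, w, a, hw, ha, harc, hPa⟩ := hP
  rw [hPa] at hf hg
  obtain ⟨i, hi, rfl⟩ := Finset.mem_image.mp hf
  obtain ⟨j, hj, rfl⟩ := Finset.mem_image.mp hg
  rw [Finset.mem_range] at hi hj
  have hei := (harc i hi).2
  have hej := (harc j hj).2
  suffices hij : i = j by rw [hij]
  have hik : i ≤ k := le_of_lt hi
  have hjk : j ≤ k := le_of_lt hj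
  have hik1 : i + 1 ≤ k := hi
  have hjk1 : j + 1 ≤ k := hj
  rcases hfe with h1 | h1 <;> rcases hge with h2 | h2 <;>
    rw [hei, Prod.ext_iff] at h1 <;> rw [hej, Prod.ext_iff] at h2 <;>
    obtain ⟨e1, e2⟩ := h1 <;> obtain ⟨e3, e4⟩ := h2 <;> simp only [] at e1 e2 e3 e4
  · exact hw i j hik hjk (e1.trans e3.symm)
  · have d1 : i = j + 1 := hw i (j+1) hik hjk1 (e1.trans e4.symm)
    have d2 : i + 1 = j := hw (i+1) j hik1 hjk (e2.trans e3.symm)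
    omega
  · have d1 : i = j + 1 := hw i (j+1) hik hjk1 (e1.trans e4.symm)
    have d2 : i + 1 = j := hw (i+1) j hik1 hjk (e2.trans e3.symm)
    omega
  · exact hw i j hik hjk (e1.trans e3.symm)

lemma sup_succ_notMem (s : Finset ℕ) : s.sup id + 1 ∉ s := by
  intro h
  have := Finset.le_sup (f := id) h
  simp only [id] at this
  omega

/-- key bijection: paths of `E` through a fixed special arc `f` with ends `p`
correspond to paths of `D₃.addArc p` through the new arc. -/
lemma card_with_special (E D₃ : MDigraph) (hends : ∀ b ∈ D₃.A, D₃.ends b = E.ends b)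
    (hsub : D₃.A ⊆ E.A) (f : ℕ) (hf : f ∈ E.A) (hf3 : f ∉ D₃.A) (p : ℕ × ℕ)
    (hfp : E.ends f = p) (k : ℕ)
    (hrest : ∀ P, IsPath E P k → f ∈ P → ∀ g ∈ P, g ≠ f → g ∈ D₃.A) :
    (E.A.powerset.filter (fun P => IsPath E P k ∧ f ∈ P)).card =
    ((D₃.addArc p).A.powerset.filter
      (fun Q => IsPath (D₃.addArc p) Q k ∧ (D₃.A.sup id + 1) ∈ Q)).card := by
  set e := D₃.A.sup id + 1 with hedef
  have he3 : e ∉ D₃.A := sup_succ_notMem D₃.A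
  have hA1 : (D₃.addArc p).A = insert e D₃.A := rfl
  have hends1e : (D₃.addArc p).ends e = p := Function.update_self _ _ _
  have hends1 : ∀ b, b ≠ e → (D₃.addArc p).ends b = D₃.ends b := by
    intro b hb
    exact Function.update_of_ne hb _ _
  apply Finset.card_bij (fun P _ => insert e (P.erase f))
  · intro P hP
    simp only [Finset.mem_filter, Finset.mem_powerset] at hP ⊢
    obtain ⟨hPA, hPpath, hfP⟩ := hP
    have hPe3 : ∀ g ∈ P.erase f, g ∈ D₃.A := by
      intro g hg
      exact hrest P hPpath hfP g (Finset.mem_of_mem_erase hg) (Finset.ne_of_mem_erase hg)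
    refine ⟨?_, ?_, Finset.mem_insert_self e _⟩
    · rw [hA1]
      intro g hg
      rcases Finset.mem_insert.mp hg with rfl | hg
      · exact Finset.mem_insert_self _ _
      · exact Finset.mem_insert_of_mem (hPe3 g hg)
    · apply isPath_swap E (D₃.addArc p) f e k P hPpath hfP
      · rw [hA1]; exact Finset.mem_insert_self _ _
      · rw [hends1e, hfp]
      · intro g hg hgf
        have hg3 : g ∈ D₃.A := hrest P hPpath hfP g hg hgf
        have hge : g ≠ e := fun h => he3 (h ▸ hg3)
        refine ⟨by rw [hA1]; exact Finset.mem_insert_of_mem hg3, ?_, hge⟩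
        rw [hends1 g hge]; exact hends g hg3
  · -- injectivity
    intro P1 hP1 P2 hP2 heq
    simp only [Finset.mem_filter, Finset.mem_powerset] at hP1 hP2
    have h1 : ∀ (P : Finset ℕ), IsPath E P k → f ∈ P → e ∉ P.erase f := by
      intro P hPp hfP hmem
      exact he3 (hrest P hPp hfP e (Finset.mem_of_mem_erase hmem) (Finset.ne_of_mem_erase hmem))
    have e1 := h1 P1 hP1.2.1 hP1.2.2
    have e2 := h1 P2 hP2.2.1 hP2.2.2
    have : P1.erase f = P2.erase f := by
      have := congrArg (fun s => Finset.erase s e) heq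
      simpa [Finset.erase_insert e1, Finset.erase_insert e2] using this
    calc P1 = insert f (P1.erase f) := (Finset.insert_erase hP1.2.2).symm
      _ = insert f (P2.erase f) := by rw [this]
      _ = P2 := Finset.insert_erase hP2.2.2
  · -- surjectivity
    intro Q hQ
    simp only [Finset.mem_filter, Finset.mem_powerset] at hQ
    obtain ⟨hQA, hQpath, heQ⟩ := hQ
    rw [hA1] at hQA
    have hQe3 : ∀ g ∈ Q.erase e, g ∈ D₃.A := by
      intro g hg
      rcases Finset.mem_insert.mp (hQA (Finset.mem_of_mem_erase hg)) with h | h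
      · exact absurd h (Finset.ne_of_mem_erase hg)
      · exact h
    have hfQe : f ∉ Q.erase e := fun h => hf3 (hQe3 f h)
    refine ⟨insert f (Q.erase e), ?_, ?_⟩
    · simp only [Finset.mem_filter, Finset.mem_powerset]
      refine ⟨?_, ?_, Finset.mem_insert_self f _⟩
      · intro g hg
        rcases Finset.mem_insert.mp hg with rfl | hg
        · exact hf
        · exact hsub (hQe3 g hg)
      · apply isPath_swap (D₃.addArc p) E e f k Q hQpath heQ hf
        · rw [hends1e] at *
          rw [hfp, hends1e]
        · intro g hg hge
          have hg3 : g ∈ D₃.A := by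
            rcases Finset.mem_insert.mp (hQA hg) with h | h
            · exact absurd h hge
            · exact h
          have hgf : g ≠ f := fun h => hf3 (h ▸ hg3)
          refine ⟨hsub hg3, ?_, hgf⟩
          rw [hends1 g hge]; exact (hends g hg3).symm
    · rw [Finset.erase_insert hfQe, Finset.insert_erase heQ]

lemma pathCount_addArc (D₃ : MDigraph) (p : ℕ × ℕ) (k : ℕ) :
    pathCount (D₃.addArc p) k = pathCount D₃ k +
      ((D₃.addArc p).A.powerset.filter
        (fun Q => IsPath (D₃.addArc p) Q k ∧ (D₃.A.sup id + 1) ∈ Q)).card := by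
  set e := D₃.A.sup id + 1 with hedef
  have he3 : e ∉ D₃.A := sup_succ_notMem D₃.A
  have hA1 : (D₃.addArc p).A = insert e D₃.A := rfl
  have hkey := Finset.card_filter_add_card_filter_not
    (s := (D₃.addArc p).A.powerset.filter (fun Q => IsPath (D₃.addArc p) Q k))
    (p := fun Q => e ∈ Q)
  rw [Finset.filter_filter, Finset.filter_filter] at hkey
  have h2 : ((D₃.addArc p).A.powerset.filter (fun Q => IsPath (D₃.addArc p) Q k ∧ e ∉ Q))
      = D₃.A.powerset.filter (fun Q => IsPath D₃ Q k) := by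
    ext Q
    simp only [Finset.mem_filter, Finset.mem_powerset]
    constructor
    · rintro ⟨hQA, hQp, heQ⟩
      have hQ3 : Q ⊆ D₃.A := by
        intro g hg
        rcases Finset.mem_insert.mp (hA1 ▸ hQA hg) with rfl | h
        · exact absurd hg heQ
        · exact h
      refine ⟨hQ3, isPath_congr _ _ _ _ (fun g hg => ⟨hQ3 hg, ?_⟩) hQp⟩
      have : g ≠ e := fun h => he3 (h ▸ hQ3 hg)
      exact (Function.update_of_ne this _ _).symm
    · rintro ⟨hQ3, hQp⟩
      refine ⟨fun g hg => hA1 ▸ Finset.mem_insert_of_mem (hQ3 hg), ?_,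
        fun h => he3 (hQ3 h)⟩
      refine isPath_congr D₃ _ _ _ (fun g hg => ⟨hA1 ▸ Finset.mem_insert_of_mem (hQ3 hg), ?_⟩) hQp
      have : g ≠ e := fun h => he3 (h ▸ hQ3 hg)
      exact Function.update_of_ne this _ _
  rw [h2] at hkey
  rw [pathCount, pathCount]
  omega

end MDigraph

open MDigraph

/-- if the arc `(u,v)` has multiplicity `n` and the arc `(v,u)` has
multiplicity `m` in `D` (`u ≠ v`), `D₃` is `D` with all these arcs deleted,
`D₁ = D₃ + (u,v)` and `D₂ = D₃ + (v,u)`, then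
`π(D;x) = n·π(D₁;x) + m·π(D₂;x) − (n+m−1)·π(D₃;x)`. -/
theorem pathPoly_parallel_reduction (D : MDigraph) (hwf : D.WellFormed)
    (u v : ℕ) (hu : u ∈ D.V) (hv : v ∈ D.V) (huv : u ≠ v) (n m : ℕ)
    (hn : (D.A.filter (fun a => D.ends a = (u, v))).card = n)
    (hm : (D.A.filter (fun a => D.ends a = (v, u))).card = m)
    (D₃ : MDigraph)
    (hD₃ : D₃ = ⟨D.V, D.A.filter (fun a => D.ends a ≠ (u, v) ∧ D.ends a ≠ (v, u)), D.ends⟩) :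
    D.pathPoly = (n : ℝ) • (D₃.addArc (u, v)).pathPoly + (m : ℝ) • (D₃.addArc (v, u)).pathPoly
      - ((n : ℝ) + (m : ℝ) - 1) • D₃.pathPoly := by
  have h3A : D₃.A = D.A.filter (fun a => D.ends a ≠ (u, v) ∧ D.ends a ≠ (v, u)) := by
    rw [hD₃]
  have h3e : D₃.ends = D.ends := by rw [hD₃]
  have h3sub : D₃.A ⊆ D.A := by rw [h3A]; exact Finset.filter_subset _ _
  set e₁ := D₃.A.sup id + 1 with he₁def
  set S₁ := D.A.filter (fun a => D.ends a = (u, v)) with hS₁def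
  set S₂ := D.A.filter (fun a => D.ends a = (v, u)) with hS₂def
  set S := S₁ ∪ S₂ with hSdef
  have hS12 : Disjoint S₁ S₂ := by
    rw [Finset.disjoint_left]
    intro a h1 h2
    rw [hS₁def, Finset.mem_filter] at h1
    rw [hS₂def, Finset.mem_filter] at h2
    rw [h1.2, Prod.ext_iff] at h2
    exact huv h2.2.1
  have hmemS : ∀ g, g ∈ S ↔ g ∈ D.A ∧ (D.ends g = (u, v) ∨ D.ends g = (v, u)) := by
    intro g
    rw [hSdef, Finset.mem_union, hS₁def, hS₂def, Finset.mem_filter, Finset.mem_filter]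
    tauto
  have hspec : ∀ g ∈ D.A, g ∉ D₃.A → (D.ends g = (u, v) ∨ D.ends g = (v, u)) := by
    intro g hg hg3
    rw [h3A, Finset.mem_filter] at hg3
    by_contra h
    push_neg at h
    exact hg3 ⟨hg, h.1, h.2⟩
  have hS3 : ∀ g ∈ S, g ∉ D₃.A := by
    intro g hg hg3
    rw [h3A, Finset.mem_filter] at hg3
    rcases (hmemS g).mp hg with ⟨_, h | h⟩
    · exact hg3.2.1 h
    · exact hg3.2.2 h
  have hnot3 : ∀ g ∈ D.A, g ∉ S → g ∈ D₃.A := by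
    intro g hg hgS
    rw [h3A, Finset.mem_filter]
    refine ⟨hg, ?_, ?_⟩ <;> intro h <;> exact hgS ((hmemS g).mpr ⟨hg, by tauto⟩)
  have hrestKey : ∀ k, ∀ P, IsPath D P k → ∀ f ∈ P, (D.ends f = (u,v) ∨ D.ends f = (v,u)) →
      ∀ g ∈ P, g ≠ f → g ∈ D₃.A := by
    intro k P hP f hfP hfe g hg hgf
    have hgA : g ∈ D.A := isPath_subset hP hg
    by_contra hg3
    exact hgf (special_unique D huv hP hg hfP (hspec g hgA hg3) hfe)
  have hq : ∀ k, ∀ f ∈ S₁,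
      (D.A.powerset.filter (fun P => IsPath D P k ∧ f ∈ P)).card =
      ((D₃.addArc (u,v)).A.powerset.filter
        (fun Q => IsPath (D₃.addArc (u,v)) Q k ∧ e₁ ∈ Q)).card := by
    intro k f hf
    rw [hS₁def, Finset.mem_filter] at hf
    exact card_with_special D D₃ (fun b _ => by rw [h3e]) h3sub f hf.1
      (hS3 f ((hmemS f).mpr ⟨hf.1, Or.inl hf.2⟩)) (u,v) hf.2 k
      (fun P hP hfP g hg hgf => hrestKey k P hP f hfP (Or.inl hf.2) g hg hgf)
  have hr : ∀ k, ∀ f ∈ S₂,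
      (D.A.powerset.filter (fun P => IsPath D P k ∧ f ∈ P)).card =
      ((D₃.addArc (v,u)).A.powerset.filter
        (fun Q => IsPath (D₃.addArc (v,u)) Q k ∧ e₁ ∈ Q)).card := by
    intro k f hf
    rw [hS₂def, Finset.mem_filter] at hf
    exact card_with_special D D₃ (fun b _ => by rw [h3e]) h3sub f hf.1
      (hS3 f ((hmemS f).mpr ⟨hf.1, Or.inr hf.2⟩)) (v,u) hf.2 k
      (fun P hP hfP g hg hgf => hrestKey k P hP f hfP (Or.inr hf.2) g hg hgf)
  have key : ∀ k, pathCount D k = pathCount D₃ k +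
      (n * ((D₃.addArc (u,v)).A.powerset.filter
        (fun Q => IsPath (D₃.addArc (u,v)) Q k ∧ e₁ ∈ Q)).card +
       m * ((D₃.addArc (v,u)).A.powerset.filter
        (fun Q => IsPath (D₃.addArc (v,u)) Q k ∧ e₁ ∈ Q)).card) := by
    intro k
    have hsplit := Finset.card_filter_add_card_filter_not
      (s := D.A.powerset.filter (fun P => IsPath D P k))
      (p := fun P => ∃ f ∈ S, f ∈ P)
    rw [Finset.filter_filter, Finset.filter_filter] at hsplit
    have havoid : (D.A.powerset.filter (fun P => IsPath D P k ∧ ¬ ∃ f ∈ S, f ∈ P))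
        = D₃.A.powerset.filter (fun P => IsPath D₃ P k) := by
      ext P
      simp only [Finset.mem_filter, Finset.mem_powerset, not_exists]
      constructor
      · rintro ⟨hPA, hPp, hPS⟩
        have hP3 : P ⊆ D₃.A := fun g hg => hnot3 g (hPA hg) (fun h => hPS g ⟨h, hg⟩)
        exact ⟨hP3, isPath_congr D D₃ P k (fun g hg => ⟨hP3 hg, by rw [h3e]⟩) hPp⟩
      · rintro ⟨hP3, hPp⟩
        refine ⟨fun g hg => h3sub (hP3 hg), isPath_congr D₃ D P k
          (fun g hg => ⟨h3sub (hP3 hg), by rw [h3e]⟩) hPp, ?_⟩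
        intro f hf
        exact hS3 f hf.1 (hP3 hf.2)
    have hhit : (D.A.powerset.filter (fun P => IsPath D P k ∧ ∃ f ∈ S, f ∈ P))
        = S.biUnion (fun f => D.A.powerset.filter (fun P => IsPath D P k ∧ f ∈ P)) := by
      ext P
      simp only [Finset.mem_biUnion, Finset.mem_filter, Finset.mem_powerset]
      constructor
      · rintro ⟨hPA, hPp, f, hfS, hfP⟩
        exact ⟨f, hfS, hPA, hPp, hfP⟩
      · rintro ⟨f, hfS, hPA, hPp, hfP⟩
        exact ⟨hPA, hPp, f, hfS, hfP⟩
    have hdisj : ∀ f ∈ (S : Finset ℕ), ∀ g ∈ S, f ≠ g →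
        Disjoint (D.A.powerset.filter (fun P => IsPath D P k ∧ f ∈ P))
          (D.A.powerset.filter (fun P => IsPath D P k ∧ g ∈ P)) := by
      intro f hfS g hgS hfg
      rw [Finset.disjoint_left]
      intro P h1 h2
      simp only [Finset.mem_filter, Finset.mem_powerset] at h1 h2
      exact hfg (special_unique D huv h1.2.1 h1.2.2 h2.2.2
        ((hmemS f).mp hfS).2 ((hmemS g).mp hgS).2)
    have hcardhit : (D.A.powerset.filter (fun P => IsPath D P k ∧ ∃ f ∈ S, f ∈ P)).card
        = n * ((D₃.addArc (u,v)).A.powerset.filter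
            (fun Q => IsPath (D₃.addArc (u,v)) Q k ∧ e₁ ∈ Q)).card +
          m * ((D₃.addArc (v,u)).A.powerset.filter
            (fun Q => IsPath (D₃.addArc (v,u)) Q k ∧ e₁ ∈ Q)).card := by
      rw [hhit, Finset.card_biUnion hdisj, hSdef, Finset.sum_union hS12]
      rw [Finset.sum_congr rfl (fun f hf => hq k f hf),
        Finset.sum_congr rfl (fun f hf => hr k f hf),
        Finset.sum_const, Finset.sum_const, hn, hm, smul_eq_mul, smul_eq_mul]
    rw [pathCount, pathCount, ← havoid, ← hcardhit]
    omega
  have hcard1 : (D₃.addArc (u,v)).A.card = D₃.A.card + 1 :=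
    Finset.card_insert_of_notMem (sup_succ_notMem D₃.A)
  have hcard2 : (D₃.addArc (v,u)).A.card = D₃.A.card + 1 :=
    Finset.card_insert_of_notMem (sup_succ_notMem D₃.A)
  set N := D.A.card + D₃.A.card + 2 with hNdef
  rw [pathPoly_eq_sum D N (by omega), pathPoly_eq_sum (D₃.addArc (u,v)) N (by omega),
    pathPoly_eq_sum (D₃.addArc (v,u)) N (by omega), pathPoly_eq_sum D₃ N (by omega)]
  rw [Finset.smul_sum, Finset.smul_sum, Finset.smul_sum, ← Finset.sum_add_distrib,
    ← Finset.sum_sub_distrib]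
  refine Finset.sum_congr rfl fun k _ => ?_
  rw [smul_smul, smul_smul, smul_smul, ← add_smul, ← sub_smul]
  congr 1
  have hA := pathCount_addArc D₃ (u,v) k
  have hB := pathCount_addArc D₃ (v,u) k
  have hK := key k
  rw [← he₁def] at hA hB
  rw [hK, hA, hB]
  push_cast
  ring
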